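/- Let (Ω, ℱ, P) be a probability space, γ > 0, N ∈ ℕ. Let X : Ω → ℝ be a random variable whose law is Gaussian with mean m and variance v ≥ 0, let Z : Ω → Fin N be a measurable random variable independent of X, and let δ : Fin N → ℝ. Define the contingent claim S := X · δ(Z). Then the entropic risk of S is e_γ(S) = −γ · ln ( Σ_{i} P(Z = i) · exp( −δ_i·m/γ + δ_i²·v/(2γ²) ) ). -/

import Mathlib

open MeasureTheory ProbabilityTheory
open scoped NNReal ENNReal

lemma gaussianPDFReal_mul_exp_key (m : ℝ) {v : ℝ≥0} (hv : v ≠ 0) (t x : ℝ) :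
    gaussianPDFReal m v x * Real.exp (t * x) =
      Real.exp (t * m + t ^ 2 * v / 2) * gaussianPDFReal (m + t * v) v x := by
  have hv' : (v : ℝ) ≠ 0 := by exact_mod_cast hv
  simp only [gaussianPDFReal]
  have h : -(x - m) ^ 2 / (2 * (v : ℝ)) + t * x
      = (t * m + t ^ 2 * v / 2) + (-(x - (m + t * v)) ^ 2 / (2 * v)) := by
    field_simp
    ring
  rw [mul_assoc, ← Real.exp_add, h, Real.exp_add]
  ring

lemma withDensity_gaussianPDF_eq (m : ℝ) (v : ℝ≥0) :
    (volume.withDensity (gaussianPDF m v))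
      = volume.withDensity (fun x => ((gaussianPDFReal m v x).toNNReal : ℝ≥0∞)) := rfl

lemma smul_toNNReal_gaussianPDFReal_exp (m : ℝ) {v : ℝ≥0} (hv : v ≠ 0) (t x : ℝ) :
    (gaussianPDFReal m v x).toNNReal • Real.exp (t * x)
      = Real.exp (t * m + t ^ 2 * v / 2) * gaussianPDFReal (m + t * v) v x := by
  rw [NNReal.smul_def, smul_eq_mul, Real.coe_toNNReal _ (gaussianPDFReal_nonneg m v x),
    gaussianPDFReal_mul_exp_key m hv t x]

lemma integrable_exp_mul_gaussianReal (m : ℝ) (v : ℝ≥0) (t : ℝ) :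
    Integrable (fun x => Real.exp (t * x)) (gaussianReal m v) := by
  by_cases hv : v = 0
  · subst hv
    rw [gaussianReal_zero_var]
    exact (integrable_const _).congr (ae_eq_dirac _).symm
  · rw [gaussianReal_of_var_ne_zero _ hv, withDensity_gaussianPDF_eq,
      integrable_withDensity_iff_integrable_smul
        ((measurable_gaussianPDFReal m v).real_toNNReal)]
    exact ((integrable_gaussianPDFReal (m + t * v) v).const_mul _).congr
      (Filter.Eventually.of_forall fun x => (smul_toNNReal_gaussianPDFReal_exp m hv t x).symm)

lemma integral_exp_mul_gaussianReal (m : ℝ) (v : ℝ≥0) (t : ℝ) :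
    ∫ x, Real.exp (t * x) ∂(gaussianReal m v) = Real.exp (t * m + t ^ 2 * v / 2) := by
  by_cases hv : v = 0
  · subst hv
    rw [gaussianReal_zero_var, integral_dirac]
    simp
  · rw [gaussianReal_of_var_ne_zero _ hv, withDensity_gaussianPDF_eq,
      integral_withDensity_eq_integral_smul ((measurable_gaussianPDFReal m v).real_toNNReal)]
    simp_rw [smul_toNNReal_gaussianPDFReal_exp m hv t]
    rw [integral_const_mul, integral_gaussianPDFReal_eq_one _ hv, mul_one]

/-- Entropic risk of a regime-dependent linear claim `S = X · δ(Z)` on a Gaussian spot price `X`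
independent of the regime variable `Z`:
`e_γ(S) = -γ ln ( Σ_i P(Z = i) exp(−δ_i m/γ + δ_i² v/(2γ²)) )`. -/
theorem entropic_risk_regime_linear {Ω : Type*} [MeasurableSpace Ω]
    (P : Measure Ω) [IsProbabilityMeasure P]
    (γ : ℝ) (hγ : 0 < γ) (N : ℕ) (m : ℝ) (v : ℝ≥0)
    (X : Ω → ℝ) (hX : Measurable X) (hlaw : P.map X = gaussianReal m v)
    (Z : Ω → Fin N) (hZ : Measurable Z) (hindep : IndepFun X Z P)
    (δ : Fin N → ℝ) :
    -γ * Real.log (∫ ω, Real.exp (-(X ω * δ (Z ω)) / γ) ∂P) =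
      -γ * Real.log (∑ i : Fin N, (P (Z ⁻¹' {i})).toReal *
        Real.exp (-(δ i * m) / γ + (δ i) ^ 2 * (v : ℝ) / (2 * γ ^ 2))) := by
  have hγ' : γ ≠ 0 := ne_of_gt hγ
  -- integrability of each exponential factor
  have hint : ∀ t : ℝ, Integrable (fun ω => Real.exp (t * X ω)) P := by
    intro t
    have hm : Measurable fun x : ℝ => Real.exp (t * x) :=
      Real.measurable_exp.comp (measurable_id.const_mul t)
    have h := (integrable_map_measure (μ := P) (g := fun x => Real.exp (t * x))
      hm.aestronglyMeasurable hX.aemeasurable).mp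
    rw [hlaw] at h
    exact h (integrable_exp_mul_gaussianReal m v t)
  -- value of each exponential integral
  have hval : ∀ t : ℝ, ∫ ω, Real.exp (t * X ω) ∂P = Real.exp (t * m + t ^ 2 * v / 2) := by
    intro t
    have hm : Measurable fun x : ℝ => Real.exp (t * x) :=
      Real.measurable_exp.comp (measurable_id.const_mul t)
    have h := integral_map (μ := P) (f := fun x => Real.exp (t * x)) hX.aemeasurable
      hm.aestronglyMeasurable
    rw [hlaw, integral_exp_mul_gaussianReal m v t] at h
    exact h.symm
  -- pointwise decomposition over the regimes
  have hpt : ∀ ω, Real.exp (-(X ω * δ (Z ω)) / γ)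
      = ∑ i : Fin N, Set.indicator ({i} : Set (Fin N)) (fun _ => (1 : ℝ)) (Z ω)
          * Real.exp ((-(δ i) / γ) * X ω) := by
    intro ω
    rw [Finset.sum_eq_single (Z ω)]
    · rw [Set.indicator_of_mem (by simp), one_mul]
      congr 1
      ring
    · intro i _ hi
      rw [Set.indicator_of_notMem (by simpa using (Ne.symm hi)), zero_mul]
    · intro h; exact absurd (Finset.mem_univ _) h
  simp_rw [hpt]
  have hInt : ∀ i ∈ (Finset.univ : Finset (Fin N)),
      Integrable (fun ω => Set.indicator ({i} : Set (Fin N)) (fun _ => (1 : ℝ)) (Z ω)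
        * Real.exp ((-(δ i) / γ) * X ω)) P := fun i _ =>
    Integrable.bdd_mul (c := 1) (hint (-(δ i) / γ))
      ((measurable_one.indicator (measurableSet_singleton i)).comp hZ).aestronglyMeasurable
      (Filter.Eventually.of_forall fun ω => by
        by_cases h : Z ω ∈ ({i} : Set (Fin N)) <;> simp [Set.indicator_apply, h])
  rw [integral_finset_sum _ hInt]
  congr 2
  refine Finset.sum_congr rfl fun i _ => ?_
  have hφ : Measurable (Set.indicator ({i} : Set (Fin N)) (fun _ => (1 : ℝ))) :=
    measurable_one.indicator (measurableSet_singleton i)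
  have hindep' : IndepFun (fun ω => Real.exp ((-(δ i) / γ) * X ω))
      (fun ω => Set.indicator ({i} : Set (Fin N)) (fun _ => (1 : ℝ)) (Z ω)) P :=
    hindep.comp (Real.measurable_exp.comp (measurable_id.const_mul (-(δ i) / γ))) hφ
  have hcomm : (fun ω => Set.indicator ({i} : Set (Fin N)) (fun _ => (1 : ℝ)) (Z ω)
      * Real.exp ((-(δ i) / γ) * X ω))
      = (fun ω => Real.exp ((-(δ i) / γ) * X ω)
      * Set.indicator ({i} : Set (Fin N)) (fun _ => (1 : ℝ)) (Z ω)) := funext fun ω => by ring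
  have hmul := hindep'.integral_mul_eq_mul_integral
    ((Real.measurable_exp.comp (hX.const_mul (-(δ i) / γ))).aestronglyMeasurable)
    (hφ.comp hZ).aestronglyMeasurable
  simp only [Pi.mul_def] at hmul
  rw [hcomm, hmul]
  have hind : (∫ ω, Set.indicator ({i} : Set (Fin N)) (fun _ => (1 : ℝ)) (Z ω) ∂P)
      = (P (Z ⁻¹' {i})).toReal := by
    have heq : (fun ω => Set.indicator ({i} : Set (Fin N)) (fun _ => (1 : ℝ)) (Z ω))
        = Set.indicator (Z ⁻¹' {i}) (fun _ => (1 : ℝ)) := by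
      funext ω
      by_cases h : Z ω = i <;> simp [Set.indicator_apply, h]
    rw [heq, integral_indicator_const (1 : ℝ) (hZ (measurableSet_singleton i))]
    simp
    rfl
  rw [hval (-(δ i) / γ), hind, mul_comm]
  congr 2
  field_simp
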